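/- Let R = F[G, η, α] be a crossed product of a left-ordered group G over a skew field F. Then R is an integral domain: the product of two nonzero elements is nonzero. -/
import Mathlib


/-- A crossed product `F[G, η, α]` of a left-ordered group `G` over a skew
field `F` (given by `ι : F → S`, a spanning, left-`F`-independent basis `x : G → S` with
the crossed-product multiplication rules) is an integral domain. -/
theorem stmt14 {F S G : Type*} [DivisionRing F] [Ring S] [Group G] [LinearOrder G]
    (hinv : ∀ a b c : G, a ≤ b → c * a ≤ c * b)
    (ι : F →+* S) (x : G → S) (η : G → G → Fˣ) (α : G → F ≃+* F)
    (hx1 : x 1 = 1)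
    (hmul : ∀ g h : G, x g * x h = ι (η g h) * x (g * h))
    (hcomm : ∀ (g : G) (a : F), x g * ι a = ι (α g a) * x g)
    (hindep : ∀ (s : Finset G) (c : G → F),
      ∑ g ∈ s, ι (c g) * x g = 0 → ∀ g ∈ s, c g = 0)
    (hspan : ∀ y : S, ∃ (s : Finset G) (c : G → F), y = ∑ g ∈ s, ι (c g) * x g) :
    ∀ y z : S, y ≠ 0 → z ≠ 0 → y * z ≠ 0 := by
  classical
  intro y z hy hz h0
  obtain ⟨s, c, hyc⟩ := hspan y
  obtain ⟨t, d, hzd⟩ := hspan z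
  set s' := s.filter (fun g => c g ≠ 0) with hs'def
  set t' := t.filter (fun g => d g ≠ 0) with ht'def
  have hys : y = ∑ g ∈ s', ι (c g) * x g := by
    rw [hyc]
    refine (Finset.sum_filter_of_ne ?_).symm
    intro g _ hne hc
    exact hne (by rw [hc, map_zero, zero_mul])
  have hzt : z = ∑ g ∈ t', ι (d g) * x g := by
    rw [hzd]
    refine (Finset.sum_filter_of_ne ?_).symm
    intro g _ hne hc
    exact hne (by rw [hc, map_zero, zero_mul])
  have hs'ne : s'.Nonempty := by
    rw [Finset.nonempty_iff_ne_empty]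
    intro h
    exact hy (by rw [hys, h, Finset.sum_empty])
  have ht'ne : t'.Nonempty := by
    rw [Finset.nonempty_iff_ne_empty]
    intro h
    exact hz (by rw [hzt, h, Finset.sum_empty])
  have hmul2 : ∀ g h : G, (ι (c g) * x g) * (ι (d h) * x h)
      = ι (c g * α g (d h) * η g h) * x (g * h) := by
    intro g h
    calc (ι (c g) * x g) * (ι (d h) * x h)
        = ι (c g) * ((x g * ι (d h)) * x h) := by rw [mul_assoc, mul_assoc]
      _ = ι (c g) * (ι (α g (d h)) * (x g * x h)) := by rw [hcomm, mul_assoc]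
      _ = ι (c g) * (ι (α g (d h)) * (ι (η g h) * x (g * h))) := by rw [hmul]
      _ = ι (c g * α g (d h) * η g h) * x (g * h) := by
          simp [map_mul, mul_assoc]
  set K := (s' ×ˢ t').image (fun p : G × G => p.1 * p.2) with hKdef
  set e : G → F := fun k =>
    ∑ p ∈ (s' ×ˢ t').filter (fun p : G × G => p.1 * p.2 = k),
      c p.1 * α p.1 (d p.2) * η p.1 p.2 with hedef
  have key : y * z = ∑ p ∈ s' ×ˢ t',
      ι (c p.1 * α p.1 (d p.2) * η p.1 p.2) * x (p.1 * p.2) := by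
    rw [hys, hzt, Finset.sum_mul_sum, ← Finset.sum_product']
    exact Finset.sum_congr rfl fun p _ => hmul2 p.1 p.2
  have hfib : y * z = ∑ k ∈ K, ι (e k) * x k := by
    rw [key, ← Finset.sum_fiberwise_of_maps_to (t := K)
      (g := fun p : G × G => p.1 * p.2)
      (fun p hp => Finset.mem_image_of_mem _ hp)
      (fun p => ι (c p.1 * α p.1 (d p.2) * η p.1 p.2) * x (p.1 * p.2))]
    refine Finset.sum_congr rfl fun k _ => ?_
    rw [hedef, map_sum, Finset.sum_mul]
    refine Finset.sum_congr rfl fun p hp => ?_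
    rw [(Finset.mem_filter.mp hp).2]
  have hzero : ∀ k ∈ K, e k = 0 := hindep K e (by rw [← hfib]; exact h0)
  -- choose maximal elements
  set b₀ := t'.max' ht'ne with hb₀
  obtain ⟨a₀, ha₀s, ha₀max⟩ := Finset.exists_max_image s' (fun a => a * b₀) hs'ne
  have hb₀t : b₀ ∈ t' := t'.max'_mem ht'ne
  have hset : (s' ×ˢ t').filter (fun p : G × G => p.1 * p.2 = a₀ * b₀)
      = {(a₀, b₀)} := by
    ext p
    simp only [Finset.mem_filter, Finset.mem_product, Finset.mem_singleton]
    constructor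
    · rintro ⟨⟨hp1, hp2⟩, heq⟩
      have h1 : p.2 ≤ b₀ := t'.le_max' _ hp2
      have h2 : p.1 * p.2 ≤ p.1 * b₀ := hinv _ _ _ h1
      have h3 : p.1 * b₀ ≤ a₀ * b₀ := ha₀max _ hp1
      have h4 : p.1 * p.2 = p.1 * b₀ := le_antisymm h2 (heq ▸ h3)
      have h5 : p.2 = b₀ := mul_left_cancel h4
      have h6 : p.1 = a₀ := by
        have := heq
        rw [h5] at this
        exact mul_right_cancel this
      exact Prod.ext h6 h5
    · rintro rfl
      exact ⟨⟨ha₀s, hb₀t⟩, rfl⟩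
  have hmem : a₀ * b₀ ∈ K := by
    have : (a₀, b₀) ∈ s' ×ˢ t' := Finset.mem_product.mpr ⟨ha₀s, hb₀t⟩
    exact Finset.mem_image_of_mem _ this
  have heval : e (a₀ * b₀) = c a₀ * α a₀ (d b₀) * η a₀ b₀ := by
    rw [hedef]
    simp [hset]
  have hca : c a₀ ≠ 0 := (Finset.mem_filter.mp ha₀s).2
  have hdb : d b₀ ≠ 0 := (Finset.mem_filter.mp hb₀t).2
  have hαdb : α a₀ (d b₀) ≠ 0 := by
    intro h
    apply hdb
    have := congrArg (α a₀).symm h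
    simpa using this
  have : e (a₀ * b₀) ≠ 0 := by
    rw [heval]
    exact mul_ne_zero (mul_ne_zero hca hαdb) (η a₀ b₀).ne_zero
  exact this (hzero _ hmem)
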